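/- Let ĉ(i,θ) be a family of positive consumption profiles increasing in i, differentiable in θ, and let k(i,θ) = (∂ĉ/∂θ)/ĉ be the growth rate. If k(i,θ) is strictly increasing in i, then for each i ∈ (0,1), the Lorenz curve L(i,θ) = (∫₀^i ĉ(j,θ)dj)/(∫₀¹ĉ(j,θ)dj) is strictly decreasing in θ. (Consequently, by scale invariance of the Atkinson index, equality is decreasing in θ.) -/

import Mathlib

open MeasureTheory

lemma my_int_lt {f g : ℝ → ℝ} {a b : ℝ} (hab : a < b)
    (hfi : IntervalIntegrable f volume a b) (hgi : IntervalIntegrable g volume a b)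
    (hle : ∀ x ∈ Set.Ioc a b, f x ≤ g x) (hlt : ∀ x ∈ Set.Ioo a b, f x < g x) :
    ∫ x in a..b, f x < ∫ x in a..b, g x := by
  have h1 : (∫ x in a..b, g x) - ∫ x in a..b, f x = ∫ x in a..b, (g x - f x) :=
    (intervalIntegral.integral_sub hgi hfi).symm
  have h2 : 0 < ∫ x in a..b, (g x - f x) := by
    rw [intervalIntegral.integral_of_le hab.le]
    rw [MeasureTheory.setIntegral_pos_iff_support_of_nonneg_ae]
    · refine lt_of_lt_of_le ?_ (measure_mono (s := Set.Ioo a b) ?_)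
      · simp [hab]
      · intro x hx
        exact ⟨sub_ne_zero.2 (hlt x hx).ne', Set.Ioo_subset_Ioc_self hx⟩
    · filter_upwards [ae_restrict_mem measurableSet_Ioc] with x hx
      exact sub_nonneg.2 (hle x hx)
    · exact (hgi.1.sub hfi.1)
  linarith

/-- Let `ĉ(i,θ)` be a family of positive consumption profiles increasing
in `i` and differentiable in `θ`, with growth rate `k(i,θ) = (∂ĉ/∂θ)/ĉ`. If `k(·,θ)` is
strictly increasing in `i`, then for each `i ∈ (0,1)` the Lorenz curve
`L(i,θ) = (∫₀^i ĉ(j,θ) dj)/(∫₀¹ ĉ(j,θ) dj)` is strictly decreasing in `θ`. -/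
theorem stmt17 (chat : ℝ → ℝ → ℝ)
    (hpos : ∀ i ∈ Set.Icc (0:ℝ) 1, ∀ θ : ℝ, 0 < chat i θ)
    (hmono : ∀ θ : ℝ, MonotoneOn (fun i => chat i θ) (Set.Icc (0:ℝ) 1))
    (hdiff : ∀ i ∈ Set.Icc (0:ℝ) 1, Differentiable ℝ (fun θ => chat i θ))
    (hk : ∀ θ : ℝ, StrictMonoOn
      (fun i => deriv (fun t => chat i t) θ / chat i θ) (Set.Icc (0:ℝ) 1)) :
    ∀ i ∈ Set.Ioo (0:ℝ) 1,
      StrictAnti (fun θ =>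
        (∫ j in (0:ℝ)..i, chat j θ) / (∫ j in (0:ℝ)..1, chat j θ)) := by
  rintro i ⟨hi0, hi1⟩ θ₁ θ₂ hθ
  have hiI : i ∈ Set.Icc (0:ℝ) 1 := ⟨hi0.le, hi1.le⟩
  have h0I : (0:ℝ) ∈ Set.Icc (0:ℝ) 1 := by norm_num
  have h1I : (1:ℝ) ∈ Set.Icc (0:ℝ) 1 := by norm_num
  -- key cross-ratio inequality
  have key : ∀ x ∈ Set.Icc (0:ℝ) 1, ∀ y ∈ Set.Icc (0:ℝ) 1, x < y →
      chat x θ₂ * chat y θ₁ < chat x θ₁ * chat y θ₂ := by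
    intro x hx y hy hxy
    have hgm : StrictMono (fun θ => Real.log (chat y θ) - Real.log (chat x θ)) := by
      apply strictMono_of_deriv_pos
      intro θ
      have hdy : HasDerivAt (fun t => Real.log (chat y t))
          (deriv (fun t => chat y t) θ / chat y θ) θ :=
        ((hdiff y hy θ).hasDerivAt).log (hpos y hy θ).ne'
      have hdx : HasDerivAt (fun t => Real.log (chat x t))
          (deriv (fun t => chat x t) θ / chat x θ) θ :=
        ((hdiff x hx θ).hasDerivAt).log (hpos x hx θ).ne'
      rw [show (fun θ => Real.log (chat y θ) - Real.log (chat x θ)) = ((fun t => Real.log (chat y t)) - fun t => Real.log (chat x t)) from rfl, (hdy.sub hdx).deriv]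
      exact sub_pos.2 (hk θ hx hy hxy)
    have h12 := hgm hθ
    simp only at h12
    have px1 := hpos x hx θ₁; have px2 := hpos x hx θ₂
    have py1 := hpos y hy θ₁; have py2 := hpos y hy θ₂
    have hlog : Real.log (chat x θ₂ * chat y θ₁) < Real.log (chat x θ₁ * chat y θ₂) := by
      rw [Real.log_mul px2.ne' py1.ne', Real.log_mul px1.ne' py2.ne']; linarith
    exact (Real.log_lt_log_iff (by positivity) (by positivity)).1 hlog
  -- integrability
  have hint : ∀ θ : ℝ, ∀ a b : ℝ, a ∈ Set.Icc (0:ℝ) 1 → b ∈ Set.Icc (0:ℝ) 1 → a ≤ b →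
      IntervalIntegrable (fun j => chat j θ) volume a b := by
    intro θ a b ha hb hab
    have hm : MonotoneOn (fun j => chat j θ) (Set.uIcc a b) := (hmono θ).mono
      (by rw [Set.uIcc_of_le hab]; exact Set.Icc_subset_Icc ha.1 hb.2)
    exact hm.intervalIntegrable
  -- positivity of partial integrals
  have hintpos : ∀ θ : ℝ, ∀ a b : ℝ, a ∈ Set.Icc (0:ℝ) 1 → b ∈ Set.Icc (0:ℝ) 1 → a < b →
      0 < ∫ j in a..b, chat j θ := by
    intro θ a b ha hb hab
    have hc : (0:ℝ) < (b - a) * chat 0 θ := mul_pos (by linarith) (hpos 0 h0I θ)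
    calc (0:ℝ) < (b - a) * chat 0 θ := hc
      _ = ∫ _ in a..b, chat 0 θ := by simp
      _ ≤ ∫ j in a..b, chat j θ := by
          apply intervalIntegral.integral_mono_on hab.le intervalIntegrable_const
            (hint θ a b ha hb hab.le)
          intro x hx
          exact hmono θ h0I ⟨le_trans ha.1 hx.1, le_trans hx.2 hb.2⟩ (le_trans ha.1 hx.1)
  set A1 := ∫ j in (0:ℝ)..i, chat j θ₁ with hA1
  set A2 := ∫ j in (0:ℝ)..i, chat j θ₂ with hA2
  set C1 := ∫ j in i..(1:ℝ), chat j θ₁ with hC1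
  set C2 := ∫ j in i..(1:ℝ), chat j θ₂ with hC2
  have hA1pos := hintpos θ₁ 0 i h0I hiI hi0
  have hA2pos := hintpos θ₂ 0 i h0I hiI hi0
  have hC1pos := hintpos θ₁ i 1 hiI h1I hi1
  have hC2pos := hintpos θ₂ i 1 hiI h1I hi1
  have hpi1 := hpos i hiI θ₁
  have hpi2 := hpos i hiI θ₂
  set r : ℝ := chat i θ₂ / chat i θ₁ with hr
  have hrpos : 0 < r := div_pos hpi2 hpi1
  -- strict inequality on [0,i]
  have hA : A2 < r * A1 := by
    have := my_int_lt (f := fun j => chat j θ₂) (g := fun j => r * chat j θ₁) hi0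
      (hint θ₂ 0 i h0I hiI hi0.le) ((hint θ₁ 0 i h0I hiI hi0.le).const_mul r)
      (fun x hx => by
        have hxI : x ∈ Set.Icc (0:ℝ) 1 := ⟨hx.1.le, le_trans hx.2 hi1.le⟩
        rcases lt_or_eq_of_le hx.2 with h | h
        · have hkey := key x hxI i hiI h
          show chat x θ₂ ≤ chat i θ₂ / chat i θ₁ * chat x θ₁
          rw [div_mul_eq_mul_div, le_div_iff₀ hpi1]
          nlinarith
        · subst h
          show chat x θ₂ ≤ chat x θ₂ / chat x θ₁ * chat x θ₁
          rw [div_mul_cancel₀ _ hpi1.ne'])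
      (fun x hx => by
        have hxI : x ∈ Set.Icc (0:ℝ) 1 := ⟨hx.1.le, le_trans hx.2.le hi1.le⟩
        have hkey := key x hxI i hiI hx.2
        show chat x θ₂ < chat i θ₂ / chat i θ₁ * chat x θ₁
        rw [div_mul_eq_mul_div, lt_div_iff₀ hpi1]
        nlinarith)
    rwa [intervalIntegral.integral_const_mul] at this
  -- non-strict inequality on [i,1]
  have hC : r * C1 ≤ C2 := by
    have := intervalIntegral.integral_mono_on (f := fun j => r * chat j θ₁)
      (g := fun j => chat j θ₂) hi1.le ((hint θ₁ i 1 hiI h1I hi1.le).const_mul r)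
      (hint θ₂ i 1 hiI h1I hi1.le)
      (fun y hy => by
        have hyI : y ∈ Set.Icc (0:ℝ) 1 := ⟨le_trans hi0.le hy.1, hy.2⟩
        rcases lt_or_eq_of_le hy.1 with h | h
        · have hkey := key i hiI y hyI h
          show chat i θ₂ / chat i θ₁ * chat y θ₁ ≤ chat y θ₂
          rw [div_mul_eq_mul_div, div_le_iff₀ hpi1]
          nlinarith
        · subst h
          show chat i θ₂ / chat i θ₁ * chat i θ₁ ≤ chat i θ₂
          rw [div_mul_cancel₀ _ hpi1.ne'])
    rwa [intervalIntegral.integral_const_mul] at this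
  -- combine
  have hB1 : (∫ j in (0:ℝ)..1, chat j θ₁) = A1 + C1 :=
    (intervalIntegral.integral_add_adjacent_intervals
      (hint θ₁ 0 i h0I hiI hi0.le) (hint θ₁ i 1 hiI h1I hi1.le)).symm
  have hB2 : (∫ j in (0:ℝ)..1, chat j θ₂) = A2 + C2 :=
    (intervalIntegral.integral_add_adjacent_intervals
      (hint θ₂ 0 i h0I hiI hi0.le) (hint θ₂ i 1 hiI h1I hi1.le)).symm
  simp only [hB1, hB2]
  rw [div_lt_div_iff₀ (by linarith) (by linarith)]
  have hAC : A2 * C1 < A1 * C2 := by nlinarith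
  nlinarith
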